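/- For k ≥ 1 define x_k = 2^(−k!) and B_k = (2^(−(k+1)!/2) + 2^(−2·k!)) / (2^(−k!) − 2^(−(k+1)!)) in ℝ. Then: (a) the quasi-Newton iteration identity x_k² + B_k·(x_{k+1} − x_k) + √(x_{k+1}) = 0 holds for every k ≥ 1 (i.e., the sequence (x_k) solves the scheme 0 ∈ g(x_k) + B_k(x_{k+1} − x_k) + F(x_{k+1}) with g(x) = x² and F(x) = |x|^(1/2)); (b) B_k → 0 = g′(0) as k → ∞; (c) x_{k+1}/x_k² → 0 as k → ∞, so the convergence rate of (x_k) to the solution x̄ = 0 exceeds q = 2. -/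

import Mathlib

open Filter

/-- The iterates `x_k = 2^(-k!)` of Example 5.2. -/
noncomputable def xseq (k : ℕ) : ℝ := (2 : ℝ) ^ (-(Nat.factorial k : ℝ))

/-- The quasi-Newton multipliers `B_k` of Example 5.2. -/
noncomputable def Bseq (k : ℕ) : ℝ :=
  ((2 : ℝ) ^ (-(Nat.factorial (k + 1) : ℝ) / 2) +
      (2 : ℝ) ^ (-(2 * (Nat.factorial k : ℝ)))) /
    ((2 : ℝ) ^ (-(Nat.factorial k : ℝ)) - (2 : ℝ) ^ (-(Nat.factorial (k + 1) : ℝ)))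

lemma tendsto_two_rpow (a : ℕ → ℝ) (h : ∀ᶠ k in atTop, a k ≤ 2 - k) :
    Tendsto (fun k => (2 : ℝ) ^ (a k)) atTop (nhds 0) := by
  have hb : Tendsto a atTop atBot := by
    refine tendsto_atBot_mono' atTop h ?_
    have : Tendsto (fun k : ℕ => -(k : ℝ)) atTop atBot :=
      tendsto_neg_atTop_atBot.comp tendsto_natCast_atTop_atTop
    simpa [sub_eq_add_neg] using tendsto_atBot_add_const_left atTop (2 : ℝ) this
  exact (tendsto_rpow_atBot_of_base_gt_one 2 one_lt_two).comp hb

lemma fk_lt (k : ℕ) (hk : 1 ≤ k) :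
    (Nat.factorial k : ℝ) + 1 ≤ (Nat.factorial (k + 1) : ℝ) := by
  have : Nat.factorial k < Nat.factorial (k + 1) :=
    (Nat.factorial_lt hk).2 (Nat.lt_succ_self k)
  exact_mod_cast this

lemma hDpos (k : ℕ) (hk : 1 ≤ k) : 0 < xseq k - xseq (k + 1) := by
  have h := fk_lt k hk
  have : (2 : ℝ) ^ (-(Nat.factorial (k + 1) : ℝ)) < 2 ^ (-(Nat.factorial k : ℝ)) :=
    (Real.rpow_lt_rpow_left_iff one_lt_two).2 (by linarith)
  simpa [xseq, sub_pos] using this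

lemma habs_half (k : ℕ) :
    |xseq (k + 1)| ^ ((1 : ℝ) / 2) = (2 : ℝ) ^ (-(Nat.factorial (k + 1) : ℝ) / 2) := by
  have hx : (0 : ℝ) < xseq (k + 1) := Real.rpow_pos_of_pos two_pos _
  rw [abs_of_pos hx, xseq, ← Real.rpow_mul (by norm_num)]
  congr 1
  ring

lemma hsq (k : ℕ) : (xseq k) ^ 2 = (2 : ℝ) ^ (-(2 * (Nat.factorial k : ℝ))) := by
  rw [xseq, ← Real.rpow_natCast ((2:ℝ) ^ (-(Nat.factorial k : ℝ))) 2,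
    ← Real.rpow_mul (by norm_num)]
  congr 1
  push_cast
  ring

/-- the sequence `x_k = 2^(-k!)` solves the quasi-Newton scheme
`0 = g(x_k) + B_k (x_{k+1} - x_k) + F(x_{k+1})` for `g(x) = x²`,
`F(x) = |x|^(1/2)`; moreover `B_k → 0 = g'(0)` and `x_{k+1}/x_k² → 0`, i.e. the
convergence rate to the solution `x̄ = 0` exceeds `q = 2`. -/
theorem quasi_newton_example :
    (∀ k : ℕ, 1 ≤ k →
      (xseq k) ^ 2 + Bseq k * (xseq (k + 1) - xseq k) +
        |xseq (k + 1)| ^ ((1 : ℝ) / 2) = 0) ∧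
    Tendsto Bseq atTop (nhds 0) ∧
    Tendsto (fun k => xseq (k + 1) / (xseq k) ^ 2) atTop (nhds 0) := by
  have hBeq : ∀ k : ℕ, Bseq k =
      (|xseq (k + 1)| ^ ((1 : ℝ) / 2) + (xseq k) ^ 2) / (xseq k - xseq (k + 1)) := by
    intro k
    rw [Bseq, habs_half, hsq, xseq, xseq]
  refine ⟨?_, ?_, ?_⟩
  · intro k hk
    have hD := hDpos k hk
    rw [hBeq k]
    field_simp
    ring
  · -- B_k → 0
    have hg : Tendsto (fun k : ℕ =>
        (2 : ℝ) ^ ((Nat.factorial k : ℝ) + 1 - (Nat.factorial (k + 1) : ℝ) / 2) +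
        (2 : ℝ) ^ (1 - (Nat.factorial k : ℝ))) atTop (nhds 0) := by
      have h1 : Tendsto (fun k : ℕ =>
          (2 : ℝ) ^ ((Nat.factorial k : ℝ) + 1 - (Nat.factorial (k + 1) : ℝ) / 2))
          atTop (nhds 0) := by
        apply tendsto_two_rpow
        filter_upwards [eventually_ge_atTop 2] with k hk
        have hF : (k : ℝ) ≤ (Nat.factorial k : ℝ) := by
          exact_mod_cast Nat.self_le_factorial k
        have hk2 : (2 : ℝ) ≤ (k : ℝ) := by exact_mod_cast hk
        have hfs : (Nat.factorial (k + 1) : ℝ) = (k + 1) * (Nat.factorial k : ℝ) := by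
          push_cast [Nat.factorial_succ]; ring
        rw [hfs]
        nlinarith [mul_nonneg (sub_nonneg.2 hk2) (by linarith : (0:ℝ) ≤ (Nat.factorial k : ℝ) - 2)]
      have h2 : Tendsto (fun k : ℕ => (2 : ℝ) ^ (1 - (Nat.factorial k : ℝ)))
          atTop (nhds 0) := by
        apply tendsto_two_rpow
        filter_upwards [eventually_ge_atTop 1] with k hk
        have hF : (k : ℝ) ≤ (Nat.factorial k : ℝ) := by
          exact_mod_cast Nat.self_le_factorial k
        linarith
      simpa using h1.add h2
    apply squeeze_zero' ?_ ?_ hg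
    · filter_upwards [eventually_ge_atTop 1] with k hk
      have hD := hDpos k hk
      rw [hBeq k]
      apply div_nonneg _ hD.le
      positivity
    · filter_upwards [eventually_ge_atTop 1] with k hk
      have hD := hDpos k hk
      set F : ℝ := (Nat.factorial k : ℝ)
      set G : ℝ := (Nat.factorial (k + 1) : ℝ)
      have hD' : (0 : ℝ) < (2 : ℝ) ^ (-F - 1) := Real.rpow_pos_of_pos two_pos _
      have hDD' : (2 : ℝ) ^ (-F - 1) ≤ xseq k - xseq (k + 1) := by
        have h1 : (2 : ℝ) ^ (-G) ≤ 2 ^ (-F - 1) :=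
          (Real.rpow_le_rpow_left_iff one_lt_two).2 (by have := fk_lt k hk; linarith)
        have h2 : (2 : ℝ) ^ (-F) = 2 * 2 ^ (-F - 1) := by
          have h := Real.rpow_add (two_pos (α := ℝ)) 1 (-F - 1)
          rw [Real.rpow_one] at h
          rw [← h]; norm_num
        simp only [xseq]
        rw [h2]
        linarith
      have hnum : (0 : ℝ) ≤ (2 : ℝ) ^ (-G / 2) + (2 : ℝ) ^ (-(2 * F)) := by positivity
      calc Bseq k ≤ ((2 : ℝ) ^ (-G / 2) + (2 : ℝ) ^ (-(2 * F))) / (2 : ℝ) ^ (-F - 1) :=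
            div_le_div_of_nonneg_left hnum hD' hDD' |>.trans_eq rfl
        _ = (2 : ℝ) ^ (F + 1 - G / 2) + (2 : ℝ) ^ (1 - F) := by
            rw [div_eq_iff hD'.ne', add_mul, ← Real.rpow_add two_pos,
              ← Real.rpow_add two_pos]
            rw [show F + 1 - G / 2 + (-F - 1) = -G / 2 by ring,
              show 1 - F + (-F - 1) = -(2 * F) by ring]
  · -- superquadratic convergence
    have heq : ∀ k : ℕ, xseq (k + 1) / (xseq k) ^ 2 =
        (2 : ℝ) ^ (2 * (Nat.factorial k : ℝ) - (Nat.factorial (k + 1) : ℝ)) := by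
      intro k
      rw [hsq, xseq, ← Real.rpow_sub two_pos]
      congr 1
      ring
    simp only [heq]
    apply tendsto_two_rpow
    filter_upwards [eventually_ge_atTop 2] with k hk
    have hF : (1 : ℝ) ≤ (Nat.factorial k : ℝ) := by
      exact_mod_cast Nat.one_le_iff_ne_zero.2 (Nat.factorial_ne_zero k)
    have hk2 : (2 : ℝ) ≤ (k : ℝ) := by exact_mod_cast hk
    have hfs : (Nat.factorial (k + 1) : ℝ) = (k + 1) * (Nat.factorial k : ℝ) := by
      push_cast [Nat.factorial_succ]; ring
    rw [hfs]
    nlinarith [mul_nonneg (sub_nonneg.2 hF) (by linarith : (0:ℝ) ≤ (k : ℝ) - 1)]
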